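/- arXiv:0711.3342 — 3 statements merged into one kernel-verified Lean document; each statement's English description precedes it below -/
import Mathlib

section
/- (Discretization inequality for Hölder functions.) For every α ∈ (0,1), every n ≥ 1 and all f, g : [0,1] → ℝ with finite ‖·‖_{H^α} norm, Σ_{i=0}^{n} |f(i/n) − g(i/n)|² ≤ 4n·∫₀¹ (f(x) − g(x))² dx + 8·n^{1−2α}·( ‖f‖²_{H^α} + ‖g‖²_{H^α} ). -/
open MeasureTheory ProbabilityTheory Real Filter
open scoped ENNReal NNReal

noncomputable section

/-- The sup norm of `f` over `[0,1]`. -/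
def supIcc (f : ℝ → ℝ) : ℝ := ⨆ t : Set.Icc (0 : ℝ) 1, |f (t : ℝ)|

/-- The Hölder seminorm `sup_{0 ≤ s < t ≤ 1} |f(t) - f(s)|/(t-s)^α`. -/
def holderSemi (α : ℝ) (f : ℝ → ℝ) : ℝ :=
  ⨆ p : {p : ℝ × ℝ // 0 ≤ p.1 ∧ p.1 < p.2 ∧ p.2 ≤ 1},
    |f (p : ℝ × ℝ).2 - f (p : ℝ × ℝ).1| / ((p : ℝ × ℝ).2 - (p : ℝ × ℝ).1) ^ α

/-- The Hölder norm `‖f‖_{H^α} = sup_{[0,1]} |f| + sup_{0 ≤ s < t ≤ 1} |f(t)-f(s)|/(t-s)^α`. -/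
def hNorm (α : ℝ) (f : ℝ → ℝ) : ℝ := supIcc f + holderSemi α f

/-- `f` has finite `H^α` norm (the suprema defining `‖f‖_{H^α}` are finite). -/
def FiniteHolderNorm (α : ℝ) (f : ℝ → ℝ) : Prop :=
  BddAbove (Set.range fun t : Set.Icc (0 : ℝ) 1 => |f (t : ℝ)|) ∧
  BddAbove (Set.range fun p : {p : ℝ × ℝ // 0 ≤ p.1 ∧ p.1 < p.2 ∧ p.2 ≤ 1} =>
    |f (p : ℝ × ℝ).2 - f (p : ℝ × ℝ).1| / ((p : ℝ × ℝ).2 - (p : ℝ × ℝ).1) ^ α)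

lemma holderSemi_nonneg (α : ℝ) (f : ℝ → ℝ)
    (hf : FiniteHolderNorm α f) : 0 ≤ holderSemi α f := by
  have hle := le_ciSup hf.2 ⟨((0:ℝ),(1:ℝ)), le_refl _, one_pos, le_refl _⟩
  refine le_trans ?_ hle
  positivity

lemma supIcc_nonneg (f : ℝ → ℝ) (hf : FiniteHolderNorm (0:ℝ) f ∨ True)
    (h : BddAbove (Set.range fun t : Set.Icc (0 : ℝ) 1 => |f (t : ℝ)|)) : 0 ≤ supIcc f := by
  have hle := le_ciSup h ⟨(0:ℝ), by norm_num⟩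
  exact le_trans (abs_nonneg _) hle

lemma sq_add_le_aux (a b A B : ℝ) (ha : 0 ≤ a) (hb : 0 ≤ b)
    (hA : a ≤ A) (hB : b ≤ B) : (a + b)^2 ≤ 2*(A^2 + B^2) := by
  nlinarith [sq_nonneg (A - B), mul_le_mul hA hB hb (le_trans ha hA)]

lemma holder_bound (α : ℝ) (hα : 0 < α) (f : ℝ → ℝ) (hf : FiniteHolderNorm α f)
    {s t : ℝ} (hs : 0 ≤ s) (hst : s ≤ t) (ht : t ≤ 1) :
    |f t - f s| ≤ holderSemi α f * (t - s) ^ α := by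
  rcases eq_or_lt_of_le hst with rfl | h
  · simp [Real.zero_rpow hα.ne']
  · have hle := le_ciSup hf.2 ⟨(s, t), hs, h, ht⟩
    have hpos : (0:ℝ) < (t - s) ^ α := Real.rpow_pos_of_pos (by linarith) α
    have hle' : |f t - f s| / (t - s) ^ α ≤ holderSemi α f := hle
    rw [div_le_iff₀ hpos] at hle'
    exact hle'

lemma contOn_of_finite (α : ℝ) (hα : 0 < α) (f : ℝ → ℝ) (hf : FiniteHolderNorm α f) :
    ContinuousOn f (Set.Icc (0:ℝ) 1) := by
  intro x hx
  have hb : ∀ y ∈ Set.Icc (0:ℝ) 1, |f y - f x| ≤ holderSemi α f * |y - x| ^ α := by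
    intro y hy
    rcases le_total x y with hxy | hxy
    · have h1 := holder_bound α hα f hf hx.1 hxy hy.2
      rwa [abs_of_nonneg (by linarith : (0:ℝ) ≤ y - x)]
    · have h1 := holder_bound α hα f hf hy.1 hxy hx.2
      rw [abs_sub_comm (f y), abs_sub_comm y x,
        abs_of_nonneg (by linarith : (0:ℝ) ≤ x - y)]
      exact h1
  have htend : Tendsto (fun y => holderSemi α f * |y - x| ^ α)
      (nhdsWithin x (Set.Icc (0:ℝ) 1)) (nhds 0) := by
    have h1 : Tendsto (fun y : ℝ => |y - x|) (nhdsWithin x (Set.Icc (0:ℝ) 1)) (nhds 0) := by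
      have h0 : ContinuousWithinAt (fun y : ℝ => |y - x|) (Set.Icc (0:ℝ) 1) x :=
        ((continuous_abs.comp (continuous_id.sub continuous_const))).continuousWithinAt
      have h0' : Tendsto (fun y : ℝ => |y - x|) (nhdsWithin x (Set.Icc (0:ℝ) 1))
          (nhds |x - x|) := h0
      simpa using h0'
    have h2 : ContinuousAt (fun u : ℝ => u ^ α) 0 :=
      Real.continuousAt_rpow_const 0 α (Or.inr hα.le)
    have h3 := (h2.tendsto.comp h1)
    rw [Real.zero_rpow hα.ne'] at h3
    simpa using h3.const_mul (holderSemi α f)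
  have h0 : Tendsto (fun y => f y - f x) (nhdsWithin x (Set.Icc (0:ℝ) 1)) (nhds 0) := by
    refine squeeze_zero_norm' ?_ htend
    exact eventually_nhdsWithin_of_forall fun y hy => by
      simpa [Real.norm_eq_abs] using hb y hy
  have := h0.add (tendsto_const_nhds (x := f x))
  simpa [ContinuousWithinAt] using this

/-- Discretization inequality for Hölder functions: for `α ∈ (0,1)`, `n ≥ 1` and
`f, g` with finite `H^α` norm,
`∑_{i=0}^n |f(i/n) - g(i/n)|² ≤ 4n ∫₀¹ (f-g)² + 8 n^{1-2α} (‖f‖²_{H^α} + ‖g‖²_{H^α})`. -/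
theorem discretization_holder (α : ℝ) (hα : α ∈ Set.Ioo (0 : ℝ) 1)
    (n : ℕ) (hn : 1 ≤ n) (f g : ℝ → ℝ)
    (hf : FiniteHolderNorm α f) (hg : FiniteHolderNorm α g) :
    ∑ i ∈ Finset.range (n + 1),
        (f ((i : ℝ) / (n : ℝ)) - g ((i : ℝ) / (n : ℝ))) ^ 2
      ≤ 4 * n * (∫ x in (0 : ℝ)..1, (f x - g x) ^ 2)
        + 8 * (n : ℝ) ^ (1 - 2 * α) * (hNorm α f ^ 2 + hNorm α g ^ 2) := by
  obtain ⟨hα0, hα1⟩ := hα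
  have hN : (0:ℝ) < (n:ℝ) := by exact_mod_cast Nat.lt_of_lt_of_le Nat.zero_lt_one hn
  set N : ℝ := (n : ℝ) with hNdef
  set a : ℕ → ℝ := fun k => (k : ℝ) / N with ha
  have ha0 : a 0 = 0 := by simp [ha]
  have han : a n = 1 := by simp only [ha]; exact div_self hN.ne'
  have hastep : ∀ k, a (k+1) = a k + 1 / N := by
    intro k; simp only [ha]; push_cast; field_simp
  have hamono : ∀ {k l : ℕ}, k ≤ l → a k ≤ a l := by
    intro k l hkl
    have hkl' : (k:ℝ) ≤ (l:ℝ) := by exact_mod_cast hkl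
    simp only [ha]
    gcongr
  -- continuity and integrability
  have contf := contOn_of_finite α hα0 f hf
  have contg := contOn_of_finite α hα0 g hg
  have hsq : ContinuousOn (fun x => (f x - g x)^2) (Set.Icc (0:ℝ) 1) :=
    (contf.sub contg).pow 2
  have hint : ∀ {p q : ℝ}, 0 ≤ p → p ≤ q → q ≤ 1 →
      IntervalIntegrable (fun x => (f x - g x)^2) volume p q := by
    intro p q hp hpq hq
    exact (hsq.mono (Set.Icc_subset_Icc hp hq)).intervalIntegrable_of_Icc hpq
  set Cf := holderSemi α f with hCf
  set Cg := holderSemi α g with hCg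
  have hCf0 : 0 ≤ Cf := holderSemi_nonneg α f hf
  have hCg0 : 0 ≤ Cg := holderSemi_nonneg α g hg
  set M : ℝ := (Cf + Cg) * (1/N) ^ α with hM
  have hM0 : 0 ≤ M := mul_nonneg (by linarith) (Real.rpow_nonneg (by positivity) α)
  -- key per-point estimate
  have key : ∀ i : ℕ, i ≤ n →
      (f (a i) - g (a i))^2 ≤
        2*N*(∫ x in a (min i (n-1))..a (min i (n-1) + 1), (f x - g x)^2) + 2*M^2 := by
    intro i hi
    set j := min i (n-1) with hj
    have hji : j ≤ i := min_le_left _ _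
    have hij : i ≤ j + 1 := by omega
    have hjn : j + 1 ≤ n := by omega
    have hb10 : 0 ≤ a j := by
      rw [← ha0]; exact hamono (Nat.zero_le _)
    have hb21 : a (j+1) ≤ 1 := by
      rw [← han]; exact hamono hjn
    have hb12 : a (j+1) = a j + 1/N := hastep j
    have hb12' : a j ≤ a (j+1) := hamono (Nat.le_succ j)
    have hu1 : a j ≤ a i := hamono hji
    have hu2 : a i ≤ a (j+1) := hamono hij
    -- pointwise bound
    have hpt : ∀ x ∈ Set.Icc (a j) (a (j+1)),
        (f (a i) - g (a i))^2 - 2*M^2 ≤ 2 * (f x - g x)^2 := by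
      intro x hx
      have hx0 : 0 ≤ x := le_trans hb10 hx.1
      have hx1 : x ≤ 1 := le_trans hx.2 hb21
      have habs : |a i - x| ≤ 1/N := by
        rw [abs_le]
        constructor <;> [skip; skip] <;>
          · have := hx.1; have := hx.2; rw [hb12] at *; linarith
      have hfd : |f (a i) - f x| ≤ Cf * |a i - x| ^ α := by
        rcases le_total x (a i) with hxy | hxy
        · have h1 := holder_bound α hα0 f hf hx0 hxy (le_trans hu2 hb21)
          rwa [abs_of_nonneg (by linarith : (0:ℝ) ≤ a i - x)]
        · have h1 := holder_bound α hα0 f hf (le_trans hb10 hu1) hxy hx1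
          rw [abs_sub_comm (f (a i)), abs_sub_comm (a i) x,
            abs_of_nonneg (by linarith : (0:ℝ) ≤ x - a i)]
          exact h1
      have hgd : |g (a i) - g x| ≤ Cg * |a i - x| ^ α := by
        rcases le_total x (a i) with hxy | hxy
        · have h1 := holder_bound α hα0 g hg hx0 hxy (le_trans hu2 hb21)
          rwa [abs_of_nonneg (by linarith : (0:ℝ) ≤ a i - x)]
        · have h1 := holder_bound α hα0 g hg (le_trans hb10 hu1) hxy hx1
          rw [abs_sub_comm (g (a i)), abs_sub_comm (a i) x,
            abs_of_nonneg (by linarith : (0:ℝ) ≤ x - a i)]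
          exact h1
      have hrp : |a i - x| ^ α ≤ (1/N) ^ α :=
        Real.rpow_le_rpow (abs_nonneg _) habs hα0.le
      have hd : |(f (a i) - g (a i)) - (f x - g x)| ≤ M := by
        calc |(f (a i) - g (a i)) - (f x - g x)|
            = |(f (a i) - f x) - (g (a i) - g x)| := by ring_nf
          _ ≤ |f (a i) - f x| + |g (a i) - g x| := abs_sub _ _
          _ ≤ Cf * |a i - x| ^ α + Cg * |a i - x| ^ α := add_le_add hfd hgd
          _ = (Cf + Cg) * |a i - x| ^ α := by ring
          _ ≤ (Cf + Cg) * (1/N) ^ α := by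
              exact mul_le_mul_of_nonneg_left hrp (by linarith)
      obtain ⟨hd1, hd2⟩ := abs_le.mp hd
      have hdsq : ((f (a i) - g (a i)) - (f x - g x))^2 ≤ M^2 := sq_le_sq' hd1 hd2
      nlinarith [sq_nonneg ((f (a i) - g (a i)) - 2*(f x - g x))]
    -- integrate
    have hii : IntervalIntegrable (fun x => (f x - g x)^2) volume (a j) (a (j+1)) :=
      hint hb10 hb12' hb21
    have hmono := intervalIntegral.integral_mono_on hb12'
      (intervalIntegrable_const (c := (f (a i) - g (a i))^2 - 2*M^2))
      (hii.const_mul 2) hpt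
    rw [intervalIntegral.integral_const, intervalIntegral.integral_const_mul] at hmono
    have hlen : a (j+1) - a j = 1/N := by rw [hb12]; ring
    rw [hlen, smul_eq_mul] at hmono
    have := mul_le_mul_of_nonneg_left hmono hN.le
    have hNne : N ≠ 0 := hN.ne'
    calc (f (a i) - g (a i))^2
        = N * (1/N * ((f (a i) - g (a i))^2 - 2*M^2)) + 2*M^2 := by field_simp; ring
      _ ≤ N * (2 * ∫ x in a j..a (j+1), (f x - g x)^2) + 2*M^2 := by linarith
      _ = 2*N*(∫ x in a j..a (j+1), (f x - g x)^2) + 2*M^2 := by ring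
  -- sum up
  have hgoal_sum : ∑ i ∈ Finset.range (n + 1), (f (a i) - g (a i)) ^ 2
      ≤ ∑ i ∈ Finset.range (n + 1),
        (2*N*(∫ x in a (min i (n-1))..a (min i (n-1) + 1), (f x - g x)^2) + 2*M^2) := by
    refine Finset.sum_le_sum fun i hi => key i ?_
    exact Nat.lt_succ_iff.mp (Finset.mem_range.mp hi)
  set T : ℝ := ∫ x in (0:ℝ)..1, (f x - g x)^2 with hT
  have hadj : ∑ i ∈ Finset.range n, (∫ x in a i..a (i+1), (f x - g x)^2) = T := by
    rw [hT, ← ha0, ← han]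
    exact intervalIntegral.sum_integral_adjacent_intervals fun k hk => by
      refine hint ?_ (hamono (Nat.le_succ k)) ?_
      · rw [← ha0]; exact hamono (Nat.zero_le _)
      · rw [← han]; exact hamono (by omega)
  have hlast : (∫ x in a (n-1)..a n, (f x - g x)^2) ≤ T := by
    have h1 : IntervalIntegrable (fun x => (f x - g x)^2) volume 0 (a (n-1)) := by
      refine hint le_rfl ?_ ?_
      · rw [← ha0]; exact hamono (Nat.zero_le _)
      · rw [← han]; exact hamono (by omega)
    have h2 : IntervalIntegrable (fun x => (f x - g x)^2) volume (a (n-1)) (a n) :=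
      hint (by rw [← ha0]; exact hamono (Nat.zero_le _)) (hamono (by omega))
        (by rw [← han])
    have hsplit := intervalIntegral.integral_add_adjacent_intervals h1 h2
    have hnn : 0 ≤ ∫ x in (0:ℝ)..a (n-1), (f x - g x)^2 := by
      refine intervalIntegral.integral_nonneg ?_ fun x _ => sq_nonneg _
      rw [← ha0]; exact hamono (Nat.zero_le _)
    rw [hT, ← han]
    nlinarith [hsplit]
  have hS : ∑ i ∈ Finset.range (n + 1),
      (∫ x in a (min i (n-1))..a (min i (n-1) + 1), (f x - g x)^2) ≤ 2 * T := by
    rw [Finset.sum_range_succ]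
    have hmin : ∀ i ∈ Finset.range n, (∫ x in a (min i (n-1))..a (min i (n-1) + 1),
        (f x - g x)^2) = ∫ x in a i..a (i+1), (f x - g x)^2 := by
      intro i hi
      have : min i (n-1) = i := by
        have := Finset.mem_range.mp hi; omega
      rw [this]
    rw [Finset.sum_congr rfl hmin, hadj]
    have hminn : min n (n-1) = n - 1 := by omega
    have hnn1 : n - 1 + 1 = n := by omega
    rw [hminn, hnn1]
    linarith [hlast]
  -- combine
  have hcomb : ∑ i ∈ Finset.range (n + 1), (f (a i) - g (a i)) ^ 2
      ≤ 4 * N * T + 2 * ((n:ℝ) + 1) * M^2 := by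
    have hdist : ∑ i ∈ Finset.range (n + 1),
        (2*N*(∫ x in a (min i (n-1))..a (min i (n-1) + 1), (f x - g x)^2) + 2*M^2)
        = 2*N*(∑ i ∈ Finset.range (n + 1),
            (∫ x in a (min i (n-1))..a (min i (n-1) + 1), (f x - g x)^2))
          + ((n:ℝ)+1)*(2*M^2) := by
      rw [Finset.sum_add_distrib, ← Finset.mul_sum, Finset.sum_const, Finset.card_range]
      push_cast; ring
    have := hgoal_sum.trans (le_of_eq hdist)
    have h2 : 2*N*(∑ i ∈ Finset.range (n + 1),
        (∫ x in a (min i (n-1))..a (min i (n-1) + 1), (f x - g x)^2)) ≤ 2*N*(2*T) :=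
      mul_le_mul_of_nonneg_left hS (by positivity)
    linarith
  -- rpow arithmetic : N * ((1/N)^α)^2 = N^(1-2α)
  have hpow : N * ((1/N) ^ α)^2 = N ^ (1 - 2*α) := by
    have h1 : (1/N) ^ α = N ^ (-α) := by
      rw [one_div, Real.inv_rpow hN.le, ← Real.rpow_neg hN.le]
    rw [h1, sq, ← Real.rpow_add hN]
    nth_rewrite 1 [← Real.rpow_one N]
    rw [← Real.rpow_add hN]
    congr 1
    ring
  have hNf1 : Cf ≤ hNorm α f := by
    have h0 := supIcc_nonneg f (Or.inr trivial) hf.1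
    have : hNorm α f = supIcc f + Cf := rfl
    linarith
  have hNg1 : Cg ≤ hNorm α g := by
    have h0 := supIcc_nonneg g (Or.inr trivial) hg.1
    have : hNorm α g = supIcc g + Cg := rfl
    linarith
  have hfin : 2 * ((n:ℝ)+1) * M^2 ≤ 8 * N ^ (1-2*α) * (hNorm α f ^2 + hNorm α g ^2) := by
    have hM2 : M^2 = (Cf+Cg)^2 * ((1/N)^α)^2 := by rw [hM]; ring
    have hn1 : (n:ℝ) + 1 ≤ 2*N := by
      have h1 : (1:ℝ) ≤ (n:ℝ) := by exact_mod_cast hn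
      rw [hNdef]; linarith
    have h4 : 2*((n:ℝ)+1)*M^2 ≤ 4*N*M^2 :=
      mul_le_mul_of_nonneg_right (by linarith) (sq_nonneg M)
    have h5 : 4*N*M^2 = 4*(N^(1-2*α))*(Cf+Cg)^2 := by rw [hM2, ← hpow]; ring
    have h6 : (Cf+Cg)^2 ≤ 2*(hNorm α f ^2 + hNorm α g ^2) :=
      sq_add_le_aux Cf Cg (hNorm α f) (hNorm α g) hCf0 hCg0 hNf1 hNg1
    have h7 : (0:ℝ) ≤ N^(1-2*α) := Real.rpow_nonneg hN.le _
    calc 2 * ((n:ℝ)+1) * M^2 ≤ 4*N*M^2 := h4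
      _ = 4*(N^(1-2*α))*(Cf+Cg)^2 := h5
      _ ≤ 4*(N^(1-2*α))*(2*(hNorm α f ^2 + hNorm α g ^2)) :=
          mul_le_mul_of_nonneg_left h6 (by linarith)
      _ = 8 * N^(1-2*α) * (hNorm α f ^2 + hNorm α g ^2) := by ring
  have hrfl : ∑ i ∈ Finset.range (n + 1), (f ((i:ℝ) / N) - g ((i:ℝ) / N)) ^ 2
      = ∑ i ∈ Finset.range (n + 1), (f (a i) - g (a i)) ^ 2 :=
    Finset.sum_congr rfl fun i _ => by simp only [ha]
  rw [hrfl]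
  calc ∑ i ∈ Finset.range (n + 1), (f (a i) - g (a i)) ^ 2
      ≤ 4 * N * T + 2 * ((n:ℝ)+1) * M^2 := hcomb
    _ ≤ 4 * N * T + 8 * N ^ (1-2*α) * (hNorm α f ^2 + hNorm α g ^2) := by linarith


end
end

section
/- (Lemma 3, abstract form.) Let (X, 𝔛, P) be a probability space and T : X → X a measurable map such that P and the image measure T_*P are equivalent and ‖P − T_*P‖_TV ≤ 2 − c* for some c* ∈ (0,2). Then for every measurable set A ⊆ X and every λ > 0, P( A ∩ { ω : (dP/d(T_*P))(Tω) ≥ e^{−λ} } ) ≥ P(A) − e^{−λ} − 1 + c*/2. -/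
open MeasureTheory ProbabilityTheory Real Filter
open scoped ENNReal NNReal

noncomputable section

/-- Total variation distance `‖μ - ν‖_TV = sup_{‖h‖_∞ ≤ 1} |∫ h dμ - ∫ h dν|`,
expressed as `2 sup_A |μ(A) - ν(A)|` over measurable sets `A`. -/
def tvDist {α : Type*} [MeasurableSpace α] (μ ν : Measure α) : ℝ :=
  (2 * ⨆ (s : Set α) (_ : MeasurableSet s), ((μ s - ν s) ⊔ (ν s - μ s))).toReal
/-- Lemma 3, abstract form: if `T : X → X` is measurable, `P` and `T_*P` are equivalent
and `‖P - T_*P‖_TV ≤ 2 - c*` for some `c* ∈ (0,2)`, then for every measurable `A` and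
every `λ > 0`,
`P(A ∩ {ω : dP/d(T_*P)(Tω) ≥ e^{-λ}}) ≥ P(A) - e^{-λ} - 1 + c*/2`. -/
theorem lemma3_abstract
    {X : Type*} [MeasurableSpace X] (P : Measure X) [IsProbabilityMeasure P]
    (T : X → X) (hT : Measurable T)
    (hac₁ : P.map T ≪ P) (hac₂ : P ≪ P.map T)
    (cstar : ℝ) (hcstar : cstar ∈ Set.Ioo (0 : ℝ) 2)
    (htv : tvDist P (P.map T) ≤ 2 - cstar)
    (A : Set X) (hA : MeasurableSet A) (lam : ℝ) (hlam : 0 < lam) :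
    (P A).toReal - Real.exp (-lam) - 1 + cstar / 2
      ≤ (P (A ∩ {ω | Real.exp (-lam) ≤ (P.rnDeriv (P.map T) (T ω)).toReal})).toReal := by
  set Q := P.map T with hQ
  haveI : IsProbabilityMeasure Q := Measure.isProbabilityMeasure_map hT.aemeasurable
  set B : Set X := {x | Real.exp (-lam) ≤ (P.rnDeriv Q x).toReal} with hB
  have hBmeas : MeasurableSet B :=
    measurableSet_le measurable_const (P.measurable_rnDeriv Q).ennreal_toReal
  -- step 1: P(Bᶜ) ≤ e^{-lam}
  have h1 : (P Bᶜ).toReal ≤ Real.exp (-lam) := by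
    have hfin : ∀ᵐ x ∂Q, P.rnDeriv Q x < ∞ := P.rnDeriv_lt_top Q
    have hP : P Bᶜ = ∫⁻ x in Bᶜ, P.rnDeriv Q x ∂Q :=
      (Measure.setLIntegral_rnDeriv hac₂ Bᶜ).symm
    have hbound : P Bᶜ ≤ ENNReal.ofReal (Real.exp (-lam)) * Q Bᶜ := by
      rw [hP]
      calc ∫⁻ x in Bᶜ, P.rnDeriv Q x ∂Q
          ≤ ∫⁻ _ in Bᶜ, ENNReal.ofReal (Real.exp (-lam)) ∂Q := by
            refine setLIntegral_mono_ae ?_ ?_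
            · exact measurable_const.aemeasurable
            · filter_upwards [hfin] with x hx hxB
              have hlt : (P.rnDeriv Q x).toReal < Real.exp (-lam) := by
                simpa [hB] using hxB
              rw [← ENNReal.ofReal_toReal hx.ne]
              exact ENNReal.ofReal_le_ofReal hlt.le
        _ = ENNReal.ofReal (Real.exp (-lam)) * Q Bᶜ := by
            simp [Measure.restrict_apply MeasurableSet.univ]
    have hle : P Bᶜ ≤ ENNReal.ofReal (Real.exp (-lam)) :=
      hbound.trans (by
        calc ENNReal.ofReal (Real.exp (-lam)) * Q Bᶜ
            ≤ ENNReal.ofReal (Real.exp (-lam)) * 1 := by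
              exact mul_le_mul_right prob_le_one _
          _ = _ := mul_one _)
    calc (P Bᶜ).toReal ≤ (ENNReal.ofReal (Real.exp (-lam))).toReal :=
          ENNReal.toReal_mono ENNReal.ofReal_ne_top hle
      _ = Real.exp (-lam) := ENNReal.toReal_ofReal (Real.exp_nonneg _)
  -- step 2: Q(Bᶜ) − P(Bᶜ) ≤ 1 − cstar/2
  have h2 : (Q Bᶜ).toReal - (P Bᶜ).toReal ≤ 1 - cstar / 2 := by
    set S : ℝ≥0∞ := ⨆ (s : Set X) (_ : MeasurableSet s), ((P s - Q s) ⊔ (Q s - P s))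
      with hS
    have hSle : S ≤ 1 := by
      refine iSup₂_le fun s hs => sup_le ?_ ?_
      · exact le_trans (tsub_le_self.trans prob_le_one) le_rfl
      · exact le_trans (tsub_le_self.trans prob_le_one) le_rfl
    have hterm : (Q Bᶜ - P Bᶜ) ≤ S := by
      refine le_trans le_sup_right (le_iSup₂_of_le Bᶜ hBmeas.compl le_rfl)
    have hne : (2 * S) ≠ ∞ := by
      refine ne_of_lt (lt_of_le_of_lt (mul_le_mul_right hSle 2) ?_)
      simp
    have h2S : (2 * (Q Bᶜ - P Bᶜ)).toReal ≤ (2 * S).toReal :=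
      ENNReal.toReal_mono hne (mul_le_mul_right hterm 2)
    have htv' : (2 * S).toReal ≤ 2 - cstar := htv
    have hsub : (Q Bᶜ).toReal - (P Bᶜ).toReal ≤ (Q Bᶜ - P Bᶜ).toReal :=
      ENNReal.le_toReal_sub (measure_ne_top _ _)
    have h2r : (2 * (Q Bᶜ - P Bᶜ)).toReal = 2 * (Q Bᶜ - P Bᶜ).toReal := by
      rw [ENNReal.toReal_mul]; norm_num
    rw [h2r] at h2S
    linarith
  -- step 3: P A ≤ P (A ∩ T⁻¹ B) + Q Bᶜ
  have hpre : {ω | Real.exp (-lam) ≤ (P.rnDeriv Q (T ω)).toReal} = T ⁻¹' B := rfl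
  have h3 : (P A).toReal ≤ (P (A ∩ T ⁻¹' B)).toReal + (Q Bᶜ).toReal := by
    have hsubset : A ⊆ (A ∩ T ⁻¹' B) ∪ T ⁻¹' Bᶜ := by
      intro x hx
      by_cases h : x ∈ T ⁻¹' B
      · exact Or.inl ⟨hx, h⟩
      · exact Or.inr h
    have hQc : P (T ⁻¹' Bᶜ) = Q Bᶜ := by
      rw [hQ, Measure.map_apply hT hBmeas.compl]
    calc (P A).toReal ≤ (P ((A ∩ T ⁻¹' B) ∪ T ⁻¹' Bᶜ)).toReal :=
          ENNReal.toReal_mono (measure_ne_top _ _) (measure_mono hsubset)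
      _ ≤ (P (A ∩ T ⁻¹' B) + P (T ⁻¹' Bᶜ)).toReal :=
          ENNReal.toReal_mono (by finiteness) (measure_union_le _ _)
      _ = (P (A ∩ T ⁻¹' B)).toReal + (Q Bᶜ).toReal := by
          rw [ENNReal.toReal_add (measure_ne_top _ _) (measure_ne_top _ _), hQc]
  rw [hpre]
  linarith

end
end

section
/- (Total variation bounded away from 2 under bounded Kullback–Leibler divergence.) For any two probability measures μ and ν on a measurable space with D(μ‖ν) < ∞, one has 1 − (1/2)‖μ − ν‖_TV ≥ (1/2)·e^{−D(μ‖ν)}; in particular, for every K < ∞ there exists δ(K) > 0 such that D(μ‖ν) ≤ K implies ‖μ − ν‖_TV ≤ 2 − δ(K). -/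
open MeasureTheory ProbabilityTheory Real Filter
open scoped ENNReal NNReal

noncomputable section

open Classical in
/-- Kullback–Leibler divergence `D(μ‖ν) = ∫ log(dμ/dν) dμ`, set to `∞` if `μ` is not
absolutely continuous with respect to `ν` (or the log-likelihood ratio is not integrable). -/
def klDiv' {α : Type*} [MeasurableSpace α] (μ ν : Measure α) : ℝ≥0∞ :=
  if μ ≪ ν ∧ Integrable (llr μ ν) μ
  then ENNReal.ofReal (∫ x, llr μ ν x ∂μ) else ⊤

lemma log_le_mul_exp_neg_one {x : ℝ} (hx : 0 < x) : Real.log x ≤ x * Real.exp (-1) := by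
  have hpos : 0 < x * Real.exp (-1) := by positivity
  have h := Real.log_le_sub_one_of_pos hpos
  rw [Real.log_mul hx.ne' (Real.exp_pos _).ne', Real.log_exp] at h
  linarith

lemma mul_neg_log_le {t : ℝ} (ht : 0 ≤ t) :
    t * max (-Real.log t) 0 ≤ Real.exp (-1) := by
  rcases eq_or_lt_of_le ht with h0 | h0
  · simp [← h0, (Real.exp_pos (-1)).le]
  rcases le_or_gt 1 t with h1 | h1
  · have : Real.log t ≥ 0 := Real.log_nonneg h1
    rw [max_eq_right (by linarith)]
    simp [(Real.exp_pos (-1)).le]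
  · have hlog : Real.log t ≤ 0 := Real.log_nonpos ht h1.le
    rw [max_eq_left (by linarith)]
    have hinv : 0 < t⁻¹ := by positivity
    have h := log_le_mul_exp_neg_one hinv
    rw [Real.log_inv] at h
    calc t * -Real.log t ≤ t * (t⁻¹ * Real.exp (-1)) := by
          apply mul_le_mul_of_nonneg_left h ht
      _ = Real.exp (-1) := by field_simp

/-- Core: `(1/2) e^{-∫ llr dμ} ≤ ∫ min(f,1) dν` and set bounds packaged:
for every measurable `s`, `|μ(s)-ν(s)| ≤ 1 - (1/2) e^{-D}` in real form. -/
lemma key_ineq {α : Type*} [MeasurableSpace α] (μ ν : Measure α)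
    [IsProbabilityMeasure μ] [IsProbabilityMeasure ν]
    (hac : μ ≪ ν) (hint : Integrable (llr μ ν) μ) {s : Set α} (hs : MeasurableSet s) :
    ((μ s).toReal - (ν s).toReal ≤ 1 - (1/2) * Real.exp (-∫ x, llr μ ν x ∂μ)) ∧
    ((ν s).toReal - (μ s).toReal ≤ 1 - (1/2) * Real.exp (-∫ x, llr μ ν x ∂μ)) := by
  set f : α → ℝ := fun x => (μ.rnDeriv ν x).toReal with hf_def
  have hf_nonneg : ∀ x, 0 ≤ f x := fun x => ENNReal.toReal_nonneg
  have hf_meas : Measurable f := (Measure.measurable_rnDeriv μ ν).ennreal_toReal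
  have hf_int : Integrable f ν := Measure.integrable_toReal_rnDeriv
  have hf_one : ∫ x, f x ∂ν = 1 := by
    rw [Measure.integral_toReal_rnDeriv hac]; simp
  set g : α → ℝ := fun x => Real.exp (-(max (Real.log (f x)) 0)) with hg_def
  have hg_meas : Measurable g :=
    ((Real.measurable_log.comp hf_meas).max measurable_const).neg.exp
  have hg_pos : ∀ x, 0 < g x := fun x => Real.exp_pos _
  have hg_le_one : ∀ x, g x ≤ 1 := fun x =>
    Real.exp_le_one_iff.mpr (by simp [le_max_right])
  set p : α → ℝ := fun x => f x * g x with hp_def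
  have hp_nonneg : ∀ x, 0 ≤ p x := fun x => mul_nonneg (hf_nonneg x) (hg_pos x).le
  have hp_le_f : ∀ x, p x ≤ f x := fun x => by
    simpa using mul_le_mul_of_nonneg_left (hg_le_one x) (hf_nonneg x)
  have hp_le_one : ∀ x, p x ≤ 1 := by
    intro x
    rcases le_or_gt (f x) 1 with h1 | h1
    · exact (hp_le_f x).trans h1
    · have hlog : 0 ≤ Real.log (f x) := Real.log_nonneg h1.le
      have : g x = (f x)⁻¹ := by
        rw [hg_def]; simp only
        rw [max_eq_left hlog, Real.exp_neg, Real.exp_log (by linarith)]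
      rw [hp_def]; simp only [this]
      rw [mul_inv_cancel₀ (by linarith)]
  have hp_meas : Measurable p := hf_meas.mul hg_meas
  have hp_int : Integrable p ν :=
    hf_int.mono hp_meas.aestronglyMeasurable (Eventually.of_forall fun x => by
      rw [Real.norm_eq_abs, Real.norm_eq_abs, abs_of_nonneg (hp_nonneg x),
        abs_of_nonneg (hf_nonneg x)]
      exact hp_le_f x)
  -- change of measure: ∫ p dν = ∫ g dμ
  have hchange : ∫ x, p x ∂ν = ∫ x, g x ∂μ := by
    have := integral_rnDeriv_smul (f := g) hac
    simpa [smul_eq_mul] using this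
  -- Jensen's inequality side
  set L : α → ℝ := fun x => max (llr μ ν x) 0 with hL_def
  have hllr_eq : ∀ x, llr μ ν x = Real.log (f x) := fun x => rfl
  have hgL : ∀ x, g x = Real.exp (-(L x)) := fun x => rfl
  have hL_int : Integrable L μ := hint.pos_part
  have hN_int : Integrable (fun x => max (-llr μ ν x) 0) μ := hint.neg.pos_part
  have hexpL_int : Integrable (fun x => Real.exp (-(L x))) μ := by
    refine Integrable.mono' (integrable_const 1)
      hg_meas.aestronglyMeasurable
      (Eventually.of_forall fun x => ?_)
    rw [Real.norm_eq_abs, abs_of_nonneg (Real.exp_pos _).le]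
    exact Real.exp_le_one_iff.mpr (by simp [hL_def, le_max_right])
  have hJensen : Real.exp (∫ x, -(L x) ∂μ) ≤ ∫ x, Real.exp (-(L x)) ∂μ := by
    have := convexOn_exp.map_integral_le (μ := μ) (f := fun x => -(L x))
      Real.continuous_exp.continuousOn isClosed_univ
      (Eventually.of_forall fun x => Set.mem_univ _) hL_int.neg
      (by exact hexpL_int)
    simpa using this
  -- ∫ L dμ ≤ ∫ llr dμ + e⁻¹
  have hLsplit : ∀ x, L x = llr μ ν x + max (-llr μ ν x) 0 := by
    intro x
    rcases le_total (llr μ ν x) 0 with h | h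
    · rw [hL_def]; simp only
      rw [max_eq_right h, max_eq_left (by linarith)]; ring
    · rw [hL_def]; simp only
      rw [max_eq_left h, max_eq_right (by linarith)]; ring
  have hLint_eq : ∫ x, L x ∂μ = ∫ x, llr μ ν x ∂μ + ∫ x, max (-llr μ ν x) 0 ∂μ := by
    simp_rw [hLsplit]
    exact integral_add hint hN_int
  have hneg_bound : ∫ x, max (-llr μ ν x) 0 ∂μ ≤ Real.exp (-1) := by
    have hch : ∫ x, f x * max (-llr μ ν x) 0 ∂ν = ∫ x, max (-llr μ ν x) 0 ∂μ := by
      have := integral_rnDeriv_smul (f := fun x => max (-llr μ ν x) 0) hac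
      simpa [smul_eq_mul] using this
    rw [← hch]
    calc ∫ x, f x * max (-llr μ ν x) 0 ∂ν ≤ ∫ _x, Real.exp (-1) ∂ν := by
          refine integral_mono_of_nonneg (Eventually.of_forall fun x =>
            mul_nonneg (hf_nonneg x) (le_max_right _ _)) (integrable_const _)
            (Eventually.of_forall fun x => ?_)
          exact mul_neg_log_le (hf_nonneg x)
      _ = Real.exp (-1) := by simp
  have hLbound : ∫ x, L x ∂μ ≤ ∫ x, llr μ ν x ∂μ + Real.exp (-1) := by
    rw [hLint_eq]; linarith
  -- combine: (1/2) exp(-∫llr) ≤ ∫ p dν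
  have hhalf : (1/2 : ℝ) * Real.exp (-∫ x, llr μ ν x ∂μ) ≤ ∫ x, p x ∂ν := by
    have h2 : Real.exp (-1) ≤ 1/2 := by
      have h1 : (2:ℝ) ≤ Real.exp 1 := by
        have := Real.add_one_le_exp (1:ℝ); linarith
      have hinv : Real.exp (-1) * Real.exp 1 = 1 := by
        rw [← Real.exp_add]; norm_num
      nlinarith [Real.exp_pos (-1)]
    have hmono : Real.exp (-(∫ x, llr μ ν x ∂μ) - Real.exp (-1))
        ≤ Real.exp (∫ x, -(L x) ∂μ) := by
      apply Real.exp_le_exp.mpr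
      rw [integral_neg]
      linarith
    have hlow : (1/2 : ℝ) * Real.exp (-∫ x, llr μ ν x ∂μ)
        ≤ Real.exp (-(∫ x, llr μ ν x ∂μ) - Real.exp (-1)) := by
      rw [sub_eq_add_neg, Real.exp_add, mul_comm]
      apply mul_le_mul_of_nonneg_left _ (Real.exp_pos _).le
      have := Real.add_one_le_exp (-Real.exp (-1))
      linarith
    have : ∫ x, Real.exp (-(L x)) ∂μ = ∫ x, g x ∂μ := by
      congr 1
    rw [hchange, ← this]
    exact hlow.trans (hmono.trans hJensen)
  -- set bounds
  have hμs : (μ s).toReal = ∫ x in s, f x ∂ν := (Measure.setIntegral_toReal_rnDeriv hac s).symm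
  have hνs : (ν s).toReal = ∫ _x in s, (1:ℝ) ∂ν := by simp; rfl
  have hintf_s : IntegrableOn f s ν := hf_int.integrableOn
  have hintp : Integrable (fun x => f x - p x) ν := hf_int.sub hp_int
  have hintq : Integrable (fun x => 1 - p x) ν := (integrable_const 1).sub hp_int
  have hfp_int_univ : ∫ x, (f x - p x) ∂ν = 1 - ∫ x, p x ∂ν := by
    rw [integral_sub hf_int hp_int, hf_one]
  have h1p_int_univ : ∫ x, ((1:ℝ) - p x) ∂ν = 1 - ∫ x, p x ∂ν := by
    rw [integral_sub (integrable_const 1) hp_int]; simp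
  constructor
  · have step1 : (μ s).toReal - (ν s).toReal = ∫ x in s, (f x - 1) ∂ν := by
      rw [hμs, hνs, ← integral_sub hintf_s (integrableOn_const (measure_ne_top ν s))]
    have step2 : ∫ x in s, (f x - 1) ∂ν ≤ ∫ x in s, (f x - p x) ∂ν :=
      setIntegral_mono_on (hintf_s.sub ((integrable_const 1).integrableOn))
        hintp.integrableOn hs (fun x _ => by have := hp_le_one x; linarith)
    have step3 : ∫ x in s, (f x - p x) ∂ν ≤ ∫ x, (f x - p x) ∂ν :=
      setIntegral_le_integral hintp (Eventually.of_forall fun x => by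
        have := hp_le_f x; simp only [Pi.zero_apply]; linarith)
    have hfinal : (μ s).toReal - (ν s).toReal ≤ 1 - ∫ x, p x ∂ν := by
      rw [step1, ← hfp_int_univ]; exact step2.trans step3
    linarith
  · have step1 : (ν s).toReal - (μ s).toReal = ∫ x in s, ((1:ℝ) - f x) ∂ν := by
      rw [hμs, hνs, ← integral_sub (integrableOn_const (C := (1:ℝ)) (measure_ne_top ν s)) hintf_s]
    have step2 : ∫ x in s, ((1:ℝ) - f x) ∂ν ≤ ∫ x in s, ((1:ℝ) - p x) ∂ν :=
      setIntegral_mono_on (((integrable_const 1).integrableOn).sub hintf_s)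
        hintq.integrableOn hs (fun x _ => by have := hp_le_f x; linarith)
    have step3 : ∫ x in s, ((1:ℝ) - p x) ∂ν ≤ ∫ x, ((1:ℝ) - p x) ∂ν :=
      setIntegral_le_integral hintq (Eventually.of_forall fun x => by
        have := hp_le_one x; simp only [Pi.zero_apply]; linarith)
    have hfinal : (ν s).toReal - (μ s).toReal ≤ 1 - ∫ x, p x ∂ν := by
      rw [step1, ← h1p_int_univ]; exact step2.trans step3
    linarith

/-- Total variation bounded away from 2 under bounded Kullback–Leibler divergence:
for probability measures `μ, ν` with `D(μ‖ν) < ∞`, `1 - ‖μ-ν‖_TV/2 ≥ (1/2)e^{-D(μ‖ν)}`;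
in particular for every `K` there is `δ(K) > 0` such that `D(μ‖ν) ≤ K` implies
`‖μ-ν‖_TV ≤ 2 - δ(K)`. -/
theorem tv_away_from_two_of_klDiv (α : Type*) [MeasurableSpace α] :
    (∀ μ ν : Measure α, IsProbabilityMeasure μ → IsProbabilityMeasure ν →
      klDiv' μ ν ≠ ⊤ →
      (1 / 2) * Real.exp (-(klDiv' μ ν).toReal) ≤ 1 - tvDist μ ν / 2) ∧
    (∀ K : ℝ, ∃ δ : ℝ, 0 < δ ∧
      ∀ μ ν : Measure α, IsProbabilityMeasure μ → IsProbabilityMeasure ν →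
        klDiv' μ ν ≤ ENNReal.ofReal K → tvDist μ ν ≤ 2 - δ) := by
  have hmain : ∀ μ ν : Measure α, IsProbabilityMeasure μ → IsProbabilityMeasure ν →
      klDiv' μ ν ≠ ⊤ →
      (1 / 2) * Real.exp (-(klDiv' μ ν).toReal) ≤ 1 - tvDist μ ν / 2 := by
    intro μ ν hμ hν hfin
    haveI := hμ; haveI := hν
    classical
    have hc : μ ≪ ν ∧ Integrable (llr μ ν) μ := by
      by_contra h
      rw [klDiv', if_neg h] at hfin
      exact hfin rfl
    have hkl : klDiv' μ ν = ENNReal.ofReal (∫ x, llr μ ν x ∂μ) := by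
      rw [klDiv', if_pos hc]
    set D := ∫ x, llr μ ν x ∂μ with hD_def
    have hD : D ≤ (klDiv' μ ν).toReal := by
      rw [hkl]
      rcases le_or_gt 0 D with h | h
      · rw [ENNReal.toReal_ofReal h]
      · rw [ENNReal.ofReal_eq_zero.mpr h.le]
        simpa using h.le
    set c : ℝ := 1 - (1/2) * Real.exp (-D) with hc_def
    have hc0 : 0 ≤ c := by
      have := (key_ineq μ ν hc.1 hc.2 (MeasurableSet.empty (α := α))).1
      simpa [hc_def] using this
    have hS : (⨆ (s : Set α) (_ : MeasurableSet s), ((μ s - ν s) ⊔ (ν s - μ s)))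
        ≤ ENNReal.ofReal c := by
      refine iSup_le fun s => iSup_le fun hs => ?_
      obtain ⟨h1, h2⟩ := key_ineq μ ν hc.1 hc.2 hs
      rw [← hD_def] at h1 h2
      refine sup_le ?_ ?_
      · rw [tsub_le_iff_right]
        calc μ s = ENNReal.ofReal ((μ s).toReal) :=
              (ENNReal.ofReal_toReal (measure_ne_top μ s)).symm
          _ ≤ ENNReal.ofReal (c + (ν s).toReal) :=
              ENNReal.ofReal_le_ofReal (by rw [hc_def]; linarith)
          _ = ENNReal.ofReal c + ν s := by
              rw [ENNReal.ofReal_add hc0 ENNReal.toReal_nonneg,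
                ENNReal.ofReal_toReal (measure_ne_top ν s)]
      · rw [tsub_le_iff_right]
        calc ν s = ENNReal.ofReal ((ν s).toReal) :=
              (ENNReal.ofReal_toReal (measure_ne_top ν s)).symm
          _ ≤ ENNReal.ofReal (c + (μ s).toReal) :=
              ENNReal.ofReal_le_ofReal (by rw [hc_def]; linarith)
          _ = ENNReal.ofReal c + μ s := by
              rw [ENNReal.ofReal_add hc0 ENNReal.toReal_nonneg,
                ENNReal.ofReal_toReal (measure_ne_top μ s)]
    have htv : tvDist μ ν ≤ 2 * c := by
      have hne : (2 : ℝ≥0∞) * ENNReal.ofReal c ≠ ⊤ :=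
        ENNReal.mul_ne_top (by simp) ENNReal.ofReal_ne_top
      have := ENNReal.toReal_mono hne (mul_le_mul_right hS 2)
      rw [tvDist]
      refine this.trans_eq ?_
      rw [ENNReal.toReal_mul, ENNReal.toReal_ofReal hc0]
      norm_num
    have hexp : Real.exp (-(klDiv' μ ν).toReal) ≤ Real.exp (-D) :=
      Real.exp_le_exp.mpr (by linarith)
    rw [hc_def] at htv
    linarith
  refine ⟨hmain, fun K => ⟨Real.exp (-(max K 0)), Real.exp_pos _, ?_⟩⟩
  intro μ ν hμ hν hK
  have hfin : klDiv' μ ν ≠ ⊤ := ne_top_of_le_ne_top ENNReal.ofReal_ne_top hK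
  have h1 := hmain μ ν hμ hν hfin
  have htR : (klDiv' μ ν).toReal ≤ max K 0 := by
    have h2 := ENNReal.toReal_mono ENNReal.ofReal_ne_top
      (hK.trans (ENNReal.ofReal_le_ofReal (le_max_left K 0)))
    rwa [ENNReal.toReal_ofReal (le_max_right K 0)] at h2
  have hexp : Real.exp (-(max K 0)) ≤ Real.exp (-(klDiv' μ ν).toReal) :=
    Real.exp_le_exp.mpr (by linarith)
  linarith

end
end
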